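/- Under the standing assumptions, let z ∈ ℝ^s, set r = g^δ − K·S_μ(z) and ẽ = x − z, and suppose ‖r‖ > τδ. Setting τ_n = ‖r‖/δ, one has ‖r − Lẽ‖ ≤ (ρ + (1+2ρ)/τ_n)·‖r‖ < (1 − ρ)·‖r‖. -/

import Mathlib

open Matrix Filter

/-- Soft-thresholding operator acting componentwise:
`S_μ(u)_i = sgn(u_i) · max(|u_i| − μ, 0)`. -/
noncomputable def soft {s : ℕ} (μ : ℝ) (u : EuclideanSpace ℝ (Fin s)) : EuclideanSpace ℝ (Fin s) :=
  WithLp.toLp 2 (fun i => Real.sign (u i) * max (|u i| - μ) 0)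

/-- Matrix-vector multiplication as a map between Euclidean spaces. -/
noncomputable def mulVecE {m n : ℕ} (A : Matrix (Fin m) (Fin n) ℝ)
    (v : EuclideanSpace ℝ (Fin n)) : EuclideanSpace ℝ (Fin m) :=
  WithLp.toLp 2 (A.mulVec v)

/-- The spectral norm of a real matrix: the operator norm induced by Euclidean vector norms. -/
noncomputable def specNorm {m n : ℕ} (A : Matrix (Fin m) (Fin n) ℝ) : ℝ :=
  ‖(Matrix.toEuclideanLin A).toContinuousLinearMap‖

/-- The ℓ¹-norm of a vector. -/
noncomputable def l1norm {s : ℕ} (u : EuclideanSpace ℝ (Fin s)) : ℝ := ∑ i, |u i|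

lemma mulVecE_sub {m n : ℕ} (M : Matrix (Fin m) (Fin n) ℝ) (u v : EuclideanSpace ℝ (Fin n)) :
    mulVecE M (u - v) = mulVecE M u - mulVecE M v := by
  ext i
  simp [mulVecE, Matrix.mulVec, dotProduct, PiLp.sub_apply, mul_sub,
    Finset.sum_sub_distrib]

/-- Proposition 1 of the paper: under the standing assumptions, if `‖r‖ > τδ` then,
with `τ_n = ‖r‖/δ`, `‖r − Lẽ‖ ≤ (ρ + (1+2ρ)/τ_n)‖r‖ < (1 − ρ)‖r‖`. -/
theorem stmt5 {N s : ℕ} (hN : 0 < N) (hs : 0 < s) (hNs : N ≤ s)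
    (A C : Matrix (Fin N) (Fin N) ℝ) (W : Matrix (Fin s) (Fin N) ℝ)
    (hW : Wᵀ * W = (1 : Matrix (Fin N) (Fin N) ℝ))
    (ρ μ δ : ℝ) (hρ0 : 0 < ρ) (hρ1 : ρ < 1 / 2) (hμ : 0 ≤ μ) (hδ : 0 < δ)
    (hi : ∀ v : EuclideanSpace ℝ (Fin N), ‖mulVecE (C - A) v‖ ≤ ρ * ‖mulVecE A v‖)
    (hii : ∀ u : EuclideanSpace ℝ (Fin s), ‖mulVecE (C * Wᵀ) (u - soft μ u)‖ ≤ ρ * δ)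
    (x : EuclideanSpace ℝ (Fin s)) (gδ : EuclideanSpace ℝ (Fin N))
    (hgδ : ‖gδ - mulVecE (A * Wᵀ) x‖ ≤ δ)
    (z : EuclideanSpace ℝ (Fin s))
    (r : EuclideanSpace ℝ (Fin N)) (hr : r = gδ - mulVecE (A * Wᵀ) (soft μ z))
    (etilde : EuclideanSpace ℝ (Fin s)) (he : etilde = x - z)
    (hbig : ‖r‖ > ((1 + 2 * ρ) / (1 - 2 * ρ)) * δ) :
    ‖r - mulVecE (C * Wᵀ) etilde‖ ≤ (ρ + (1 + 2 * ρ) / (‖r‖ / δ)) * ‖r‖ ∧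
    (ρ + (1 + 2 * ρ) / (‖r‖ / δ)) * ‖r‖ < (1 - ρ) * ‖r‖ := by
  have h2ρ : (0:ℝ) < 1 - 2 * ρ := by linarith
  have hrpos : 0 < ‖r‖ := lt_trans (by positivity) hbig
  -- key algebraic identity
  have key : r - mulVecE (C * Wᵀ) etilde
      = (gδ - mulVecE (A * Wᵀ) x) - mulVecE ((C - A) * Wᵀ) (x - soft μ z)
        + mulVecE (C * Wᵀ) (z - soft μ z) := by
    subst hr he
    simp only [Matrix.sub_mul, mulVecE_sub]
    simp only [mulVecE, Matrix.sub_mulVec]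
    ext i
    simp only [PiLp.sub_apply, PiLp.add_apply, Pi.sub_apply, Pi.add_apply]
    ring
  -- bound on A Wᵀ (x - soft μ z)
  have hAx : ‖mulVecE (A * Wᵀ) (x - soft μ z)‖ ≤ δ + ‖r‖ := by
    have : mulVecE (A * Wᵀ) (x - soft μ z)
        = -(gδ - mulVecE (A * Wᵀ) x) + r := by
      subst hr
      simp only [mulVecE_sub]
      ext i
      simp only [PiLp.sub_apply, PiLp.add_apply, PiLp.neg_apply, Pi.sub_apply, Pi.add_apply,
        Pi.neg_apply]
      ring
    rw [this]
    calc ‖-(gδ - mulVecE (A * Wᵀ) x) + r‖ ≤ ‖-(gδ - mulVecE (A * Wᵀ) x)‖ + ‖r‖ :=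
          norm_add_le _ _
      _ ≤ δ + ‖r‖ := by rw [norm_neg]; linarith
  have hCA : ‖mulVecE ((C - A) * Wᵀ) (x - soft μ z)‖ ≤ ρ * (δ + ‖r‖) := by
    have h1 : mulVecE ((C - A) * Wᵀ) (x - soft μ z)
        = mulVecE (C - A) (mulVecE Wᵀ (x - soft μ z)) := by
      simp [mulVecE, Matrix.mulVec_mulVec]
    have h2 : mulVecE (A * Wᵀ) (x - soft μ z)
        = mulVecE A (mulVecE Wᵀ (x - soft μ z)) := by
      simp [mulVecE, Matrix.mulVec_mulVec]
    rw [h1]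
    calc ‖mulVecE (C - A) (mulVecE Wᵀ (x - soft μ z))‖
        ≤ ρ * ‖mulVecE A (mulVecE Wᵀ (x - soft μ z))‖ := hi _
      _ ≤ ρ * (δ + ‖r‖) := by
          apply mul_le_mul_of_nonneg_left _ hρ0.le
          rw [← h2]; exact hAx
  have hC : ‖mulVecE (C * Wᵀ) (z - soft μ z)‖ ≤ ρ * δ := hii z
  have main : ‖r - mulVecE (C * Wᵀ) etilde‖ ≤ ρ * ‖r‖ + (1 + 2 * ρ) * δ := by
    rw [key]
    calc ‖(gδ - mulVecE (A * Wᵀ) x) - mulVecE ((C - A) * Wᵀ) (x - soft μ z)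
          + mulVecE (C * Wᵀ) (z - soft μ z)‖
        ≤ ‖(gδ - mulVecE (A * Wᵀ) x) - mulVecE ((C - A) * Wᵀ) (x - soft μ z)‖
          + ‖mulVecE (C * Wᵀ) (z - soft μ z)‖ := norm_add_le _ _
      _ ≤ ‖gδ - mulVecE (A * Wᵀ) x‖ + ‖mulVecE ((C - A) * Wᵀ) (x - soft μ z)‖
          + ‖mulVecE (C * Wᵀ) (z - soft μ z)‖ := by
            have := norm_sub_le (gδ - mulVecE (A * Wᵀ) x)
              (mulVecE ((C - A) * Wᵀ) (x - soft μ z))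
            linarith
      _ ≤ δ + ρ * (δ + ‖r‖) + ρ * δ := by linarith
      _ = ρ * ‖r‖ + (1 + 2 * ρ) * δ := by ring
  have heq : (ρ + (1 + 2 * ρ) / (‖r‖ / δ)) * ‖r‖ = ρ * ‖r‖ + (1 + 2 * ρ) * δ := by
    field_simp
  constructor
  · rw [heq]; exact main
  · rw [heq]
    have h3 : (1 + 2 * ρ) * δ < (1 - 2 * ρ) * ‖r‖ := by
      rw [gt_iff_lt, div_mul_eq_mul_div, div_lt_iff₀ h2ρ] at hbig
      linarith [hbig]
    nlinarith
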